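/- For m > 1, every injective endomorphism φ of B(m,m) maps the center ⟨bᵐ⟩ into itself. -/

import Mathlib

/-- The defining relation of the Baumslag-Solitar group `B(m,n)`:
`a⁻¹ bᵐ a = bⁿ`, where `a` is `FreeGroup.of false` and `b` is `FreeGroup.of true`. -/
def BSrel (m n : ℤ) : Set (FreeGroup Bool) :=
  {(FreeGroup.of false)⁻¹ * (FreeGroup.of true) ^ m * FreeGroup.of false *
    ((FreeGroup.of true) ^ n)⁻¹}

/-- The Baumslag-Solitar group `B(m,n) = ⟨a, b | a⁻¹ bᵐ a = bⁿ⟩`. -/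
abbrev BS (m n : ℤ) : Type := PresentedGroup (BSrel m n)

/-- The generator `a` of `B(m,n)`. -/
def BSa (m n : ℤ) : BS m n := PresentedGroup.of false

/-- The generator `b` of `B(m,n)`. -/
def BSb (m n : ℤ) : BS m n := PresentedGroup.of true

namespace BSAux

/-- Generic constructor of homs out of `BS m n`. -/
def bsHom {m n : ℤ} {T : Type*} [Group T] (c d : T) (h : c⁻¹ * d ^ m * c = d ^ n) :
    BS m n →* T :=
  PresentedGroup.toGroup (f := fun i => bif i then d else c) (by
    rintro r ⟨rfl⟩
    simp only [map_mul, map_inv, map_zpow, FreeGroup.lift_apply_of, cond_true, cond_false]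
    rw [h]
    group)

@[simp] lemma bsHom_a {m n : ℤ} {T : Type*} [Group T] (c d : T)
    (h : c⁻¹ * d ^ m * c = d ^ n) : bsHom c d h (BSa m n) = c :=
  PresentedGroup.toGroup.of _

@[simp] lemma bsHom_b {m n : ℤ} {T : Type*} [Group T] (c d : T)
    (h : c⁻¹ * d ^ m * c = d ^ n) : bsHom c d h (BSb m n) = d :=
  PresentedGroup.toGroup.of _

lemma bs_hom_ext {m n : ℤ} {T : Type*} [Group T] (f g : BS m n →* T)
    (ha : f (BSa m n) = g (BSa m n)) (hb : f (BSb m n) = g (BSb m n)) : f = g := by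
  ext j
  cases j
  · exact ha
  · exact hb

lemma bs_rel (m n : ℤ) : (BSa m n)⁻¹ * (BSb m n) ^ m * BSa m n = (BSb m n) ^ n := by
  have hmem : ((FreeGroup.of false)⁻¹ * (FreeGroup.of true) ^ m * FreeGroup.of false *
      ((FreeGroup.of true) ^ n)⁻¹) ∈ Subgroup.normalClosure (BSrel m n) :=
    Subgroup.subset_normalClosure rfl
  have h1 : PresentedGroup.mk (BSrel m n) ((FreeGroup.of false)⁻¹ * (FreeGroup.of true) ^ m *
      FreeGroup.of false * ((FreeGroup.of true) ^ n)⁻¹) = 1 := by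
    rwa [← QuotientGroup.eq_one_iff] at hmem
    
  simp only [map_mul, map_inv, map_zpow] at h1
  have : ((BSa m n)⁻¹ * (BSb m n) ^ m * BSa m n) * ((BSb m n) ^ n)⁻¹ = 1 := h1
  rw [mul_inv_eq_one] at this
  exact this

/-- `b^m` is central in `BS m m`. -/
lemma b_pow_central (m : ℤ) (g : BS m m) :
    g * (BSb m m) ^ m = (BSb m m) ^ m * g := by
  have hg : g ∈ Subgroup.centralizer {(BSb m m) ^ m} := by
    refine PresentedGroup.generated_by _ (Subgroup.centralizer {(BSb m m) ^ m}) (fun j => ?_) g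
    rw [Subgroup.mem_centralizer_iff]
    rintro h ⟨rfl⟩
    cases j
    · -- a
      have h2 := bs_rel m m
      show (BSb m m) ^ m * BSa m m = BSa m m * (BSb m m) ^ m
      calc (BSb m m) ^ m * BSa m m
          = (BSa m m) * ((BSa m m)⁻¹ * (BSb m m) ^ m * BSa m m) := by group
        _ = BSa m m * (BSb m m) ^ m := by rw [h2]
    · -- b
      show (BSb m m) ^ m * (BSb m m) = (BSb m m) * (BSb m m) ^ m
      group
  exact (Subgroup.mem_centralizer_iff.mp hg (BSb m m ^ m) (Set.mem_singleton _)).symm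

/-! ### The free product `ℤ * ℤ/M` -/

open Monoid

/-- The two factors. -/
def Fac (M : ℕ) : Bool → Type
  | false => Multiplicative ℤ
  | true => Multiplicative (ZMod M)

instance (M : ℕ) : ∀ i, Group (Fac M i)
  | false => inferInstanceAs (Group (Multiplicative ℤ))
  | true => inferInstanceAs (Group (Multiplicative (ZMod M)))

instance (M : ℕ) : ∀ i, DecidableEq (Fac M i)
  | false => inferInstanceAs (DecidableEq (Multiplicative ℤ))
  | true => inferInstanceAs (DecidableEq (Multiplicative (ZMod M)))

/-- The generator of the `ℤ` factor. -/
def gA (M : ℕ) : CoprodI (Fac M) :=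
  CoprodI.of (i := false) (Multiplicative.ofAdd (1 : ℤ))

/-- The generator of the `ℤ/M` factor. -/
def gB (M : ℕ) : CoprodI (Fac M) :=
  CoprodI.of (i := true) (Multiplicative.ofAdd (1 : ZMod M))

lemma gB_pow_M (M : ℕ) : gB M ^ (M : ℤ) = 1 := by
  have h : (Multiplicative.ofAdd (1 : ZMod M)) ^ (M : ℕ) = 1 := by
    rw [← ofAdd_nsmul, nsmul_eq_mul, mul_one, ZMod.natCast_self]
    rfl
  rw [gB, zpow_natCast]
  refine (map_pow (CoprodI.of (M := Fac M) (i := true)) _ M).symm.trans ?_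
  exact (congrArg (CoprodI.of (M := Fac M) (i := true)) h).trans (map_one _)

/-- A hom out of `Multiplicative (ZMod M)` determined by an element whose `M`-th power is 1. -/
def zmodPow {G : Type*} [Group G] {M : ℕ} [NeZero M] (t : G) (ht : t ^ (M : ℕ) = 1) :
    Multiplicative (ZMod M) →* G where
  toFun z := t ^ (Multiplicative.toAdd z).val
  map_one' := by simp
  map_mul' x y := by
    have hdvd : orderOf t ∣ M := orderOf_dvd_of_pow_eq_one ht
    have key : ∀ a : ℕ, t ^ (a % M) = t ^ a := fun a =>
      pow_eq_pow_iff_modEq.mpr ((Nat.mod_modEq a M).of_dvd hdvd)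
    show t ^ (Multiplicative.toAdd x + Multiplicative.toAdd y).val = _
    rw [ZMod.val_add, key, pow_add]

lemma zmodPow_ofAdd_one {G : Type*} [Group G] {M : ℕ} [NeZero M] (hM : 1 < M) (t : G)
    (ht : t ^ (M : ℕ) = 1) : zmodPow t ht (Multiplicative.ofAdd (1 : ZMod M)) = t := by
  have : Fact (1 < M) := ⟨hM⟩
  show t ^ (Multiplicative.toAdd (Multiplicative.ofAdd (1 : ZMod M))).val = t
  rw [toAdd_ofAdd, ZMod.val_one, pow_one]

/-! ### The projection `BS m m → ℤ * ℤ/M` and its kernel -/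

/-- The projection `π : BS m m → ℤ * ℤ/M`. -/
def piQ (m : ℤ) (M : ℕ) (hMm : (M : ℤ) = m) : BS m m →* CoprodI (Fac M) :=
  bsHom (gA M) (gB M) (by
    have h := gB_pow_M M
    rw [hMm] at h
    rw [h]
    group)

@[simp] lemma piQ_a (m : ℤ) (M : ℕ) (hMm : (M : ℤ) = m) : piQ m M hMm (BSa m m) = gA M :=
  bsHom_a _ _ _

@[simp] lemma piQ_b (m : ℤ) (M : ℕ) (hMm : (M : ℤ) = m) : piQ m M hMm (BSb m m) = gB M :=
  bsHom_b _ _ _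

/-- The subgroup generated by the central element `b^m`. -/
def NZ (m : ℤ) : Subgroup (BS m m) := Subgroup.zpowers ((BSb m m) ^ m)

instance NZnormal (m : ℤ) : (NZ m).Normal := by
  constructor
  intro n hn g
  obtain ⟨k, rfl⟩ := hn
  have hc : Commute g ((BSb m m) ^ m) := b_pow_central m g
  have : g * ((BSb m m) ^ m) ^ k * g⁻¹ = ((BSb m m) ^ m) ^ k := by
    rw [(hc.zpow_right k).eq, mul_assoc, mul_inv_cancel, mul_one]
  rw [this]
  exact Subgroup.zpow_mem _ (Subgroup.mem_zpowers _) k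

lemma mkb_pow (m : ℤ) (M : ℕ) (hMm : (M : ℤ) = m) :
    (QuotientGroup.mk' (NZ m) (BSb m m)) ^ (M : ℕ) = 1 := by
  rw [← map_pow, QuotientGroup.mk'_apply, QuotientGroup.eq_one_iff]
  have : (BSb m m) ^ (M : ℕ) = (BSb m m) ^ (m : ℤ) := by
    rw [← zpow_natCast, hMm]
  rw [this]
  exact Subgroup.mem_zpowers _

/-- The section `σ : ℤ * ℤ/M → (BS m m)/⟨b^m⟩`. -/
def sigmaQ (m : ℤ) (M : ℕ) [NeZero M] (hMm : (M : ℤ) = m) :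
    CoprodI (Fac M) →* BS m m ⧸ NZ m :=
  CoprodI.lift (fun i => match i with
    | false => zpowersHom _ (QuotientGroup.mk' (NZ m) (BSa m m))
    | true => zmodPow (QuotientGroup.mk' (NZ m) (BSb m m)) (mkb_pow m M hMm))

lemma ker_piQ (m : ℤ) (M : ℕ) [NeZero M] (hM : 1 < M) (hMm : (M : ℤ) = m)
    (g : BS m m) (hg : piQ m M hMm g = 1) : g ∈ NZ m := by
  have hcomp : (sigmaQ m M hMm).comp (piQ m M hMm) = QuotientGroup.mk' (NZ m) := by
    apply bs_hom_ext
    · show sigmaQ m M hMm (piQ m M hMm (BSa m m)) = _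
      rw [piQ_a]
      show CoprodI.lift _ (CoprodI.of _) = _
      refine (CoprodI.lift_of _ _).trans ?_
      show zpowersHom _ _ (Multiplicative.ofAdd (1 : ℤ)) = _
      simp
    · show sigmaQ m M hMm (piQ m M hMm (BSb m m)) = _
      rw [piQ_b]
      show CoprodI.lift _ (CoprodI.of _) = _
      refine (CoprodI.lift_of _ _).trans ?_
      exact zmodPow_ofAdd_one hM _ _
  have : QuotientGroup.mk' (NZ m) g = 1 := by
    rw [← hcomp]
    show sigmaQ m M hMm (piQ m M hMm g) = 1
    rw [hg, map_one]
  rwa [QuotientGroup.mk'_apply, QuotientGroup.eq_one_iff] at this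

/-! ### Word lemmas in the free product -/

section Words

variable {M : ℕ}

lemma word_prod_injective (M : ℕ) :
    Function.Injective (CoprodI.Word.prod : CoprodI.Word (Fac M) → CoprodI (Fac M)) :=
  fun _ _ h => (CoprodI.Word.equiv (M := Fac M)).symm.injective h

lemma prod_eq_q (q : CoprodI (Fac M)) :
    (CoprodI.Word.equiv q).prod = q :=
  (CoprodI.Word.equiv (M := Fac M)).symm_apply_apply q

/-- nontrivial witness in each factor -/
def wit (M : ℕ) : ∀ j : Bool, Fac M j
  | false => Multiplicative.ofAdd (1 : ℤ)
  | true => Multiplicative.ofAdd (1 : ZMod M)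

lemma wit_ne_one (hM : 1 < M) : ∀ j : Bool, wit M j ≠ 1
  | false => by
      show Multiplicative.ofAdd (1 : ℤ) ≠ Multiplicative.ofAdd (0 : ℤ)
      simp
  | true => by
      haveI : Fact (1 < M) := ⟨hM⟩
      show Multiplicative.ofAdd (1 : ZMod M) ≠ Multiplicative.ofAdd (0 : ZMod M)
      simp

/-- The center of `ℤ * ℤ/M` is trivial (for `M > 1`). -/
lemma center_triv (hM : 1 < M) (q : CoprodI (Fac M)) (hq : ∀ w, q * w = w * q) :
    q = 1 := by
  by_contra hq1
  set w := CoprodI.Word.equiv q with hw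
  have hqprod : CoprodI.Word.prod w = q := prod_eq_q q
  set L := w.toList with hLdef
  have hL : L ≠ [] := by
    intro hnil
    apply hq1
    have hwempty : w = CoprodI.Word.empty := CoprodI.Word.ext hnil
    rw [← hqprod, hwempty, CoprodI.Word.prod_empty]
  have hqL : q = List.prod (L.map fun l => CoprodI.of l.snd) := by
    rw [← hqprod]; rfl
  set i := (L.head hL).fst with hi
  set Lst := L.getLast hL with hLst
  set k := Lst.fst with hk
  have hsplit : L.dropLast ++ [Lst] = L := List.dropLast_append_getLast hL
  have hchain : L.IsChain (fun l l' => l.fst ≠ l'.fst) := w.chain_ne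
  have hne1 : ∀ l ∈ L, l.snd ≠ 1 := w.ne_one
  -- head? of L
  have hhead? : L.head? = some (L.head hL) := List.head?_eq_head hL
  by_cases hik : i = k
  · -- conjugate by a letter from the other factor
    set j := !i with hj
    have hji : j ≠ i := Bool.not_ne_self i
    set h := wit M j with hhdef
    have hne : h ≠ 1 := wit_ne_one hM j
    have hchain2 : (⟨j, h⟩ :: (L ++ [⟨j, h⁻¹⟩]) :
        List (Σ i, Fac M i)).IsChain (fun l l' => l.fst ≠ l'.fst) := by
      rw [List.isChain_cons]
      constructor
      · intro y hy
        rw [List.head?_append_of_ne_nil _ hL] at hy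
        rw [hhead?] at hy
        simp only [Option.mem_some_iff] at hy
        subst hy
        exact hji
      · rw [List.isChain_append]
        refine ⟨hchain, List.isChain_singleton _, ?_⟩
        intro x hx y hy
        simp only [List.head?_cons, Option.mem_some_iff] at hy
        subst hy
        have hxval : Lst = x := by
          rw [List.getLast?_eq_getLast hL] at hx
          simpa using hx
        rw [← hxval]
        show k ≠ j
        rw [← hik]
        exact hji.symm
    have hne2 : ∀ l ∈ (⟨j, h⟩ :: (L ++ [⟨j, h⁻¹⟩]) : List (Σ i, Fac M i)), l.snd ≠ 1 := by
      intro l hl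
      rcases List.mem_cons.mp hl with rfl | hl
      · exact hne
      rcases List.mem_append.mp hl with hl | hl
      · exact hne1 l hl
      · simp only [List.mem_singleton] at hl
        subst hl
        exact inv_ne_one.mpr hne
    set w2 : CoprodI.Word (Fac M) := ⟨⟨j, h⟩ :: (L ++ [⟨j, h⁻¹⟩]), hne2, hchain2⟩ with hw2
    have hprod2 : w2.prod = q := by
      show List.prod (((⟨j, h⟩ :: (L ++ [⟨j, h⁻¹⟩]) : List (Σ i, Fac M i))).map
        fun l => CoprodI.of l.snd) = q
      rw [List.map_cons, List.prod_cons, List.map_append, List.prod_append]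
      simp only [List.map_singleton, List.prod_singleton]
      rw [← hqL]
      rw [map_inv]
      rw [← mul_assoc, ← hq (CoprodI.of h), mul_assoc, mul_inv_cancel, mul_one]
    have heqw : w2 = w := word_prod_injective M (by rw [hprod2, hqprod])
    have hlen : (⟨j, h⟩ :: (L ++ [⟨j, h⁻¹⟩]) : List (Σ i, Fac M i)).length = L.length := by
      have := congrArg (fun u : CoprodI.Word (Fac M) => u.toList.length) heqw
      exact this
    simp only [List.length_cons, List.length_append, List.length_singleton] at hlen
    omega
  · -- multiply by a letter with the index of the last letter
    set h := wit M k with hhdef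
    have hne : h ≠ 1 := wit_ne_one hM k
    -- word for `of h * q`
    have hchain1 : ((⟨k, h⟩ : Σ i, Fac M i) :: L).IsChain (fun l l' => l.fst ≠ l'.fst) := by
      rw [List.isChain_cons]
      refine ⟨?_, hchain⟩
      intro y hy
      rw [hhead?] at hy
      simp only [Option.mem_some_iff] at hy
      subst hy
      exact fun hc => hik (hc.symm)
    have hne1' : ∀ l ∈ ((⟨k, h⟩ : Σ i, Fac M i) :: L), l.snd ≠ 1 := by
      intro l hl
      rcases List.mem_cons.mp hl with rfl | hl
      · exact hne
      · exact hne1 l hl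
    set w1 : CoprodI.Word (Fac M) := ⟨(⟨k, h⟩ : Σ i, Fac M i) :: L, hne1', hchain1⟩ with hw1
    have hprodw1 : w1.prod = CoprodI.of h * q := by
      show List.prod ((((⟨k, h⟩ : Σ i, Fac M i)) :: L).map fun l => CoprodI.of l.snd)
        = CoprodI.of h * q
      rw [List.map_cons, List.prod_cons, ← hqL]
    -- decompose L
    have hchain' : (L.dropLast ++ [Lst]).IsChain (fun l l' => l.fst ≠ l'.fst) := by
      rw [hsplit]; exact hchain
    rw [List.isChain_append] at hchain'
    obtain ⟨hchainD, -, hconn⟩ := hchain'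
    have hne1D : ∀ l ∈ L.dropLast, l.snd ≠ 1 := fun l hl =>
      hne1 l (List.dropLast_subset L hl)
    have hqsplit : q = List.prod ((L.dropLast).map fun l => CoprodI.of l.snd) *
        CoprodI.of Lst.snd := by
      rw [hqL]
      conv_lhs => rw [← hsplit]
      rw [List.map_append, List.prod_append]
      simp
    by_cases hgh : Lst.snd * h = 1
    · set w2 : CoprodI.Word (Fac M) := ⟨L.dropLast, hne1D, hchainD⟩ with hw2
      have hprodw2 : w2.prod = q * CoprodI.of h := by
        show List.prod ((L.dropLast).map fun l => CoprodI.of l.snd) = q * CoprodI.of h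
        rw [hqsplit, mul_assoc, ← map_mul, hgh, map_one, mul_one]
      have heqw : w2 = w1 := word_prod_injective M (by rw [hprodw2, hprodw1, hq])
      have hlen : L.dropLast.length = ((⟨k, h⟩ : Σ i, Fac M i) :: L).length :=
        congrArg (fun u : CoprodI.Word (Fac M) => u.toList.length) heqw
      have hlenD : L.dropLast.length = L.length - 1 := List.length_dropLast
      have hLpos : 0 < L.length := List.length_pos_iff.mpr hL
      simp only [List.length_cons] at hlen
      omega
    · have hchain3 : (L.dropLast ++ [⟨k, Lst.snd * h⟩] :
          List (Σ i, Fac M i)).IsChain (fun l l' => l.fst ≠ l'.fst) := by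
        rw [List.isChain_append]
        refine ⟨hchainD, List.isChain_singleton _, ?_⟩
        intro x hx y hy
        simp only [List.head?_cons, Option.mem_some_iff] at hy
        subst hy
        exact hconn x hx Lst (by simp)
      have hne3 : ∀ l ∈ (L.dropLast ++ [⟨k, Lst.snd * h⟩] : List (Σ i, Fac M i)),
          l.snd ≠ 1 := by
        intro l hl
        rcases List.mem_append.mp hl with hl | hl
        · exact hne1D l hl
        · simp only [List.mem_singleton] at hl
          subst hl
          exact hgh
      set w3 : CoprodI.Word (Fac M) := ⟨L.dropLast ++ [⟨k, Lst.snd * h⟩], hne3, hchain3⟩ with hw3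
      have hprodw3 : w3.prod = q * CoprodI.of h := by
        show List.prod ((L.dropLast ++ [⟨k, Lst.snd * h⟩] :
          List (Σ i, Fac M i)).map fun l => CoprodI.of l.snd) = q * CoprodI.of h
        rw [List.map_append, List.prod_append, hqsplit]
        simp [map_mul, mul_assoc]
      have heqw : w3 = w1 := word_prod_injective M (by rw [hprodw3, hprodw1, hq])
      have hlen : (L.dropLast ++ [⟨k, Lst.snd * h⟩] : List (Σ i, Fac M i)).length
          = ((⟨k, h⟩ : Σ i, Fac M i) :: L).length :=
        congrArg (fun u : CoprodI.Word (Fac M) => u.toList.length) heqw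
      have hlenD : L.dropLast.length = L.length - 1 := List.length_dropLast
      have hLpos : 0 < L.length := List.length_pos_iff.mpr hL
      have hlen2 : L.length - 1 + 1 = L.length + 1 := by
        simpa [List.length_append, List.length_cons, hlenD] using hlen
      omega

/-- The word `A B A⁻¹ B A B⁻¹ A⁻¹ B⁻¹ = [[A,B],B]` is nontrivial in `ℤ * ℤ/M`. -/
lemma key_word_ne (hM : 1 < M) :
    gA M * gB M * (gA M)⁻¹ * gB M * gA M * (gB M)⁻¹ * (gA M)⁻¹ * (gB M)⁻¹ ≠ 1 := by
  haveI : Fact (1 < M) := ⟨hM⟩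
  set a1 : (Σ i, Fac M i) := ⟨false, Multiplicative.ofAdd (1 : ℤ)⟩ with ha1
  set a2 : (Σ i, Fac M i) := ⟨false, Multiplicative.ofAdd (-1 : ℤ)⟩ with ha2
  set b1 : (Σ i, Fac M i) := ⟨true, Multiplicative.ofAdd (1 : ZMod M)⟩ with hb1
  set b2 : (Σ i, Fac M i) := ⟨true, Multiplicative.ofAdd (-1 : ZMod M)⟩ with hb2
  have hone : (1 : ZMod M) ≠ 0 := one_ne_zero
  have hne : ∀ l ∈ [a1, b1, a2, b1, a1, b2, a2, b2], l.snd ≠ 1 := by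
    intro l hl
    simp only [List.mem_cons, List.not_mem_nil, or_false] at hl
    rcases hl with rfl | rfl | rfl | rfl | rfl | rfl | rfl | rfl
    · show Multiplicative.ofAdd (1 : ℤ) ≠ Multiplicative.ofAdd 0; simp
    · show Multiplicative.ofAdd (1 : ZMod M) ≠ Multiplicative.ofAdd 0; simpa using hone
    · show Multiplicative.ofAdd (-1 : ℤ) ≠ Multiplicative.ofAdd 0; simp
    · show Multiplicative.ofAdd (1 : ZMod M) ≠ Multiplicative.ofAdd 0; simpa using hone
    · show Multiplicative.ofAdd (1 : ℤ) ≠ Multiplicative.ofAdd 0; simp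
    · show Multiplicative.ofAdd (-1 : ZMod M) ≠ Multiplicative.ofAdd 0
      simpa using neg_ne_zero.mpr hone
    · show Multiplicative.ofAdd (-1 : ℤ) ≠ Multiplicative.ofAdd 0; simp
    · show Multiplicative.ofAdd (-1 : ZMod M) ≠ Multiplicative.ofAdd 0
      simpa using neg_ne_zero.mpr hone
  have hchain : ([a1, b1, a2, b1, a1, b2, a2, b2] :
      List (Σ i, Fac M i)).IsChain (fun l l' => l.fst ≠ l'.fst) := by
    simp [ha1, ha2, hb1, hb2]
  set w8 : CoprodI.Word (Fac M) := ⟨[a1, b1, a2, b1, a1, b2, a2, b2], hne, hchain⟩ with hw8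
  intro hcontr
  have hprod : w8.prod = gA M * gB M * (gA M)⁻¹ * gB M * gA M * (gB M)⁻¹ * (gA M)⁻¹
      * (gB M)⁻¹ := by
    show List.prod (([a1, b1, a2, b1, a1, b2, a2, b2] :
      List (Σ i, Fac M i)).map fun l => CoprodI.of l.snd) = _
    have hAinv : (CoprodI.of (M := Fac M) (i := false) (Multiplicative.ofAdd (-1 : ℤ)) :
        CoprodI (Fac M)) = (gA M)⁻¹ := by
      rw [gA]; refine Eq.trans ?_ (map_inv (CoprodI.of (M := Fac M) (i := false)) _)
      rfl
    have hBinv : (CoprodI.of (M := Fac M) (i := true) (Multiplicative.ofAdd (-1 : ZMod M)) :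
        CoprodI (Fac M)) = (gB M)⁻¹ := by
      rw [gB]; refine Eq.trans ?_ (map_inv (CoprodI.of (M := Fac M) (i := true)) _)
      rfl
    simp only [List.map_cons, List.map_nil, List.prod_cons, List.prod_nil, mul_one]
    rw [show (CoprodI.of a1.snd : CoprodI (Fac M)) = gA M from rfl]
    rw [show (CoprodI.of b1.snd : CoprodI (Fac M)) = gB M from rfl]
    rw [show (CoprodI.of a2.snd : CoprodI (Fac M)) = (gA M)⁻¹ from hAinv]
    rw [show (CoprodI.of b2.snd : CoprodI (Fac M)) = (gB M)⁻¹ from hBinv]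
    group
  have : w8 = CoprodI.Word.empty := by
    apply word_prod_injective M
    rw [hprod, hcontr, CoprodI.Word.prod_empty]
  have hlen : ([a1, b1, a2, b1, a1, b2, a2, b2] : List (Σ i, Fac M i)).length
      = ([] : List (Σ i, Fac M i)).length :=
    congrArg (fun u : CoprodI.Word (Fac M) => u.toList.length) this
  simp at hlen

end Words

/-! ### Matrices over `ℂ[X]` and the ping-pong representation -/

section Matrices

open Polynomial

abbrev Rp : Type := Polynomial ℂ
abbrev Mat : Type := Matrix (Fin 2) (Fin 2) Rp

lemma deg_lt_succ (p : Rp) (hp : p ≠ 0) : p.degree < p.degree + 1 := by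
  rw [Polynomial.degree_eq_natDegree hp]
  exact_mod_cast lt_add_one p.natDegree

lemma ne_zero_of_deg_succ {p q : Rp} (hp : p ≠ 0) (h : q.degree = p.degree + 1) : q ≠ 0 := by
  intro h0
  rw [h0, Polynomial.degree_zero, Polynomial.degree_eq_natDegree hp] at h
  exact absurd h.symm (by exact_mod_cast WithBot.coe_ne_bot)

/-- The unipotent family `c ↦ [[1, cX],[0,1]]`. -/
noncomputable def uA (c : ℂ) : Matˣ where
  val := !![1, C c * X; 0, 1]
  inv := !![1, -(C c * X); 0, 1]
  val_inv := by
    apply Matrix.ext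
    intro i j
    fin_cases i <;> fin_cases j <;>
      simp [Matrix.mul_apply, Fin.sum_univ_two, Matrix.one_apply]
  inv_val := by
    apply Matrix.ext
    intro i j
    fin_cases i <;> fin_cases j <;>
      simp [Matrix.mul_apply, Fin.sum_univ_two, Matrix.one_apply]

lemma uA_mul (c d : ℂ) : uA c * uA d = uA (c + d) := by
  apply Units.ext
  show (!![1, C c * X; 0, 1] * !![1, C d * X; 0, 1] : Mat) = !![1, C (c + d) * X; 0, 1]
  apply Matrix.ext
  intro i j
  fin_cases i <;> fin_cases j <;>
    simp [Matrix.mul_apply, Fin.sum_univ_two, map_add] <;> ring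

/-- The order-`M` family `c ↦ [[1, 0],[c - 1, c]]`. -/
noncomputable def uB (c : ℂ) (hc : c ≠ 0) : Matˣ where
  val := !![1, 0; C c - 1, C c]
  inv := !![1, 0; C c⁻¹ - 1, C c⁻¹]
  val_inv := by
    have h1 : (C c : Rp) * C c⁻¹ = 1 := by
      rw [← map_mul, mul_inv_cancel₀ hc, map_one]
    apply Matrix.ext
    intro i j
    fin_cases i <;> fin_cases j <;>
      simp [Matrix.mul_apply, Fin.sum_univ_two, Matrix.one_apply] <;>
      linear_combination h1
  inv_val := by
    have h1 : (C c⁻¹ : Rp) * C c = 1 := by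
      rw [← map_mul, inv_mul_cancel₀ hc, map_one]
    apply Matrix.ext
    intro i j
    fin_cases i <;> fin_cases j <;>
      simp [Matrix.mul_apply, Fin.sum_univ_two, Matrix.one_apply] <;>
      linear_combination h1

lemma uB_mul (c d : ℂ) (hc : c ≠ 0) (hd : d ≠ 0) :
    uB c hc * uB d hd = uB (c * d) (mul_ne_zero hc hd) := by
  apply Units.ext
  show (!![1, 0; C c - 1, C c] * !![1, 0; C d - 1, C d] : Mat)
      = !![1, 0; C (c * d) - 1, C (c * d)]
  apply Matrix.ext
  intro i j
  fin_cases i <;> fin_cases j <;>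
    simp [Matrix.mul_apply, Fin.sum_univ_two, map_mul] <;> ring

lemma uB_one : uB 1 one_ne_zero = 1 := by
  apply Units.ext
  show (!![1, 0; C 1 - 1, C 1] : Mat) = (1 : Mat)
  apply Matrix.ext
  intro i j
  rw [Matrix.one_fin_two]
  fin_cases i <;> fin_cases j <;> simp

lemma uB_pow (c : ℂ) (hc : c ≠ 0) (k : ℕ) : (uB c hc) ^ k = uB (c ^ k) (pow_ne_zero k hc) := by
  induction k with
  | zero =>
    rw [pow_zero]
    symm
    apply Units.ext
    show (!![1, 0; C (c ^ 0) - 1, C (c ^ 0)] : Mat) = (1 : Mat)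
    apply Matrix.ext
    intro i j
    rw [Matrix.one_fin_two, pow_zero, map_one]
    fin_cases i <;> fin_cases j <;> simp
  | succ n ih =>
    rw [pow_succ, ih, uB_mul]
    apply Units.ext
    show (!![1, 0; C (c ^ n * c) - 1, C (c ^ n * c)] : Mat) = _
    rw [show (uB (c ^ (n + 1)) (pow_ne_zero (n + 1) hc)).val
        = !![1, 0; C (c ^ (n + 1)) - 1, C (c ^ (n + 1))] from rfl, pow_succ]

/-- `Mat` units act on vectors. -/
noncomputable instance matUnitsSMul : SMul Matˣ (Fin 2 → Rp) :=
  ⟨fun u v => (u : Mat).mulVec v⟩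

lemma matSmul_def (u : Matˣ) (v : Fin 2 → Rp) : u • v = (u : Mat).mulVec v := rfl

noncomputable instance matUnitsAction : MulAction Matˣ (Fin 2 → Rp) where
  one_smul v := by
    show ((1 : Matˣ) : Mat).mulVec v = v
    rw [Units.val_one, Matrix.one_mulVec]
  mul_smul u u' v := by
    show ((u * u' : Matˣ) : Mat).mulVec v = (u : Mat).mulVec ((u' : Mat).mulVec v)
    rw [Units.val_mul, Matrix.mulVec_mulVec]

lemma uA_smul (c : ℂ) (v : Fin 2 → Rp) (i : Fin 2) :
    (uA c • v) i = if i = 0 then v 0 + (C c * X) * v 1 else v 1 := by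
  rw [matSmul_def]
  fin_cases i <;>
    simp [uA, Matrix.mulVec, dotProduct, Fin.sum_univ_two]

lemma uB_smul (c : ℂ) (hc : c ≠ 0) (v : Fin 2 → Rp) (i : Fin 2) :
    (uB c hc • v) i = if i = 0 then v 0 else (C c - 1) * v 0 + C c * v 1 := by
  rw [matSmul_def]
  fin_cases i <;>
    simp [uB, Matrix.mulVec, dotProduct, Fin.sum_univ_two]

/-- Ping-pong sets. -/
def XS : Bool → Set (Fin 2 → Rp)
  | false => {v | v 0 ≠ 0 ∧ v 1 ≠ 0 ∧ (v 0).degree = (v 1).degree + 1}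
  | true => {v | v 0 ≠ 0 ∧ v 1 ≠ 0 ∧ (v 0).degree = (v 1).degree}

lemma uA_zero : uA 0 = 1 := by
  apply Units.ext
  show (!![1, C 0 * X; 0, 1] : Mat) = (1 : Mat)
  apply Matrix.ext
  intro i j
  rw [Matrix.one_fin_two]
  fin_cases i <;> fin_cases j <;> simp

/-- The `ℤ`-factor representation. -/
noncomputable def phiA : Multiplicative ℤ →* Matˣ where
  toFun n := uA ((Multiplicative.toAdd n : ℤ) : ℂ)
  map_one' := by
    show uA (((0 : ℤ) : ℂ)) = 1
    rw [Int.cast_zero, uA_zero]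
  map_mul' x y := by
    show uA _ = uA _ * uA _
    rw [uA_mul]
    congr 1
    push_cast [toAdd_mul]
    ring

open Pointwise

/-- The family of factor representations. -/
noncomputable def fFam (M : ℕ) [NeZero M] (ζ : ℂ) (hζ0 : ζ ≠ 0)
    (hB : (uB ζ hζ0) ^ (M : ℕ) = 1) : ∀ i, (Fac M i) →* Matˣ
  | false => phiA
  | true => zmodPow (uB ζ hζ0) hB

theorem rho_injective (M : ℕ) [NeZero M] (hM : 1 < M) (ζ : ℂ) (hζ : IsPrimitiveRoot ζ M)
    (hζ0 : ζ ≠ 0) (hB : (uB ζ hζ0) ^ (M : ℕ) = 1) :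
    Function.Injective (CoprodI.lift (fFam M ζ hζ0 hB)) := by
  have hcard : (3 : Cardinal) ≤ Cardinal.mk Bool ∨ ∃ i, (3 : Cardinal) ≤ Cardinal.mk (Fac M i) := by
    right
    refine ⟨false, ?_⟩
    have hcong : Cardinal.mk (Fac M false) = Cardinal.mk ℤ :=
      Cardinal.mk_congr (Multiplicative.toAdd (α := ℤ))
    rw [hcong, Cardinal.mk_int]
    exact_mod_cast (Cardinal.nat_lt_aleph0 3).le
  apply CoprodI.lift_injective_of_ping_pong (fFam M ζ hζ0 hB) hcard XS
  · -- nonempty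
    intro i
    cases i
    · exact ⟨![X, 1], X_ne_zero, one_ne_zero, by
        rw [Matrix.cons_val_zero, Matrix.cons_val_one, Matrix.cons_val_zero,
          Polynomial.degree_X, Polynomial.degree_one]; rfl⟩
    · exact ⟨![1, 1], one_ne_zero, one_ne_zero, rfl⟩
  · -- disjoint
    have key : Disjoint (XS false) (XS true) := by
      rw [Set.disjoint_left]
      rintro v ⟨h0, h1, hdeg⟩ ⟨-, -, hdeg'⟩
      rw [hdeg'] at hdeg
      exact absurd hdeg.symm (deg_lt_succ (v 1) h1).ne'
    intro i j hij
    cases i <;> cases j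
    · exact absurd rfl hij
    · exact key
    · exact key.symm
    · exact absurd rfl hij
  · -- ping-pong
    intro i j hij
    cases i <;> cases j
    · exact absurd rfl hij
    · -- A moves X1 into X0
      intro h hne
      have hn : (Multiplicative.toAdd (h : Multiplicative ℤ) : ℤ) ≠ 0 := fun hc =>
        hne ((toAdd_eq_zero (α := ℤ) (x := h)).mp hc)
      have hnC : ((Multiplicative.toAdd h : ℤ) : ℂ) ≠ 0 := Int.cast_ne_zero.mpr hn
      rintro x hx
      obtain ⟨v, hv, rfl⟩ := hx
      obtain ⟨hv0, hv1, hvdeg⟩ := hv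
      show (fFam M ζ hζ0 hB false h • v) ∈ XS false
      have h0 : (fFam M ζ hζ0 hB false h • v) 0
          = v 0 + (C ((Multiplicative.toAdd h : ℤ) : ℂ) * X) * v 1 := by
        show (uA _ • v) 0 = _
        rw [uA_smul]
        simp
      have h1 : (fFam M ζ hζ0 hB false h • v) 1 = v 1 := by
        show (uA _ • v) 1 = _
        rw [uA_smul]
        simp
      have hdegmul : (C ((Multiplicative.toAdd h : ℤ) : ℂ) * X * v 1).degree
          = (v 1).degree + 1 := by
        rw [Polynomial.degree_mul, Polynomial.degree_C_mul_X hnC, add_comm]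
      have hlt : (v 0).degree < (C ((Multiplicative.toAdd h : ℤ) : ℂ) * X * v 1).degree := by
        rw [hdegmul, hvdeg]
        exact deg_lt_succ (v 1) hv1
      have hdeg0 : ((fFam M ζ hζ0 hB false h • v) 0).degree = (v 1).degree + 1 := by
        rw [h0, Polynomial.degree_add_eq_right_of_degree_lt hlt, hdegmul]
      refine ⟨?_, ?_, ?_⟩
      · exact ne_zero_of_deg_succ hv1 hdeg0
      · rw [h1]; exact hv1
      · rw [hdeg0, h1]
    · -- B moves X0 into X1
      intro h hne
      set k : ℕ := (Multiplicative.toAdd (h : Multiplicative (ZMod M))).val with hk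
      have hk0 : k ≠ 0 := by
        intro hc
        exact hne ((toAdd_eq_zero (α := ZMod M) (x := h)).mp
          ((ZMod.val_eq_zero (Multiplicative.toAdd (h : Multiplicative (ZMod M)))).mp hc))
      have hkM : k < M := ZMod.val_lt _
      set c : ℂ := ζ ^ k with hc
      have hc0 : c ≠ 0 := pow_ne_zero _ hζ0
      have hc1 : c ≠ 1 := hζ.pow_ne_one_of_pos_of_lt hk0 hkM
      have hfval : fFam M ζ hζ0 hB true h = uB c hc0 := by
        show (uB ζ hζ0) ^ k = _
        rw [uB_pow]
      rintro x hx
      obtain ⟨v, hv, rfl⟩ := hx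
      obtain ⟨hv0, hv1, hvdeg⟩ := hv
      show (fFam M ζ hζ0 hB true h • v) ∈ XS true
      have h0 : (fFam M ζ hζ0 hB true h • v) 0 = v 0 := by
        rw [hfval, uB_smul]
        simp
      have h1 : (fFam M ζ hζ0 hB true h • v) 1 = (C c - 1) * v 0 + C c * v 1 := by
        rw [hfval, uB_smul]
        simp
      have hd1 : ((C c - 1 : Rp) * v 0).degree = (v 0).degree := by
        rw [Polynomial.degree_mul, show (C c - 1 : Rp) = C (c - 1) by rw [map_sub, map_one],
          Polynomial.degree_C (sub_ne_zero.mpr hc1), zero_add]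
      have hd2 : ((C c : Rp) * v 1).degree < ((C c - 1 : Rp) * v 0).degree := by
        rw [hd1, Polynomial.degree_mul, Polynomial.degree_C hc0, zero_add, hvdeg]
        exact deg_lt_succ (v 1) hv1
      have hdeg1 : ((fFam M ζ hζ0 hB true h • v) 1).degree = (v 0).degree := by
        rw [h1, Polynomial.degree_add_eq_left_of_degree_lt hd2, hd1]
      refine ⟨?_, ?_, ?_⟩
      · rw [h0]; exact hv0
      · intro hzero
        rw [hzero, Polynomial.degree_zero] at hdeg1
        exact hv0 (Polynomial.degree_eq_bot.mp hdeg1.symm)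
      · rw [h0, hdeg1]
    · exact absurd rfl hij

end Matrices

/-! ### Commutant of a nonscalar 2×2 matrix over a field -/

section Commutant

variable {K : Type*} [Field K]

lemma commutant_two {A B : Matrix (Fin 2) (Fin 2) K}
    (hA : ¬ ∃ c : K, A = c • (1 : Matrix (Fin 2) (Fin 2) K))
    (hAB : A * B = B * A) : ∃ p q : K, B = p • (1 : Matrix (Fin 2) (Fin 2) K) + q • A := by
  have E : ∀ i j, A i 0 * B 0 j + A i 1 * B 1 j = B i 0 * A 0 j + B i 1 * A 1 j := by
    intro i j
    have h := congrFun (congrFun (congrArg (fun x => x) hAB) i) j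
    simpa [Matrix.mul_apply, Fin.sum_univ_two] using h
  have entry : ∀ (p q : K), (p • (1 : Matrix (Fin 2) (Fin 2) K) + q • A) = fun i j =>
      p * (if i = j then 1 else 0) + q * A i j := by
    intro p q
    funext i j
    simp [Matrix.one_apply, Matrix.add_apply, Matrix.smul_apply, smul_eq_mul]
  by_cases hc : A 1 0 ≠ 0
  · refine ⟨B 0 0 - B 1 0 / A 1 0 * A 0 0, B 1 0 / A 1 0, ?_⟩
    rw [entry]
    funext i j
    fin_cases i <;> fin_cases j
    · show B 0 0 = (B 0 0 - B 1 0 / A 1 0 * A 0 0) * 1 + B 1 0 / A 1 0 * A 0 0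
      ring
    · show B 0 1 = (B 0 0 - B 1 0 / A 1 0 * A 0 0) * 0 + B 1 0 / A 1 0 * A 0 1
      have h00 := E 0 0
      field_simp
      linear_combination -h00
    · show B 1 0 = (B 0 0 - B 1 0 / A 1 0 * A 0 0) * 0 + B 1 0 / A 1 0 * A 1 0
      field_simp
      ring
    · show B 1 1 = (B 0 0 - B 1 0 / A 1 0 * A 0 0) * 1 + B 1 0 / A 1 0 * A 1 1
      have h10 := E 1 0
      field_simp
      linear_combination - h10
  · push_neg at hc
    by_cases hb : A 0 1 ≠ 0
    · refine ⟨B 0 0 - B 0 1 / A 0 1 * A 0 0, B 0 1 / A 0 1, ?_⟩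
      rw [entry]
      funext i j
      fin_cases i <;> fin_cases j
      · show B 0 0 = (B 0 0 - B 0 1 / A 0 1 * A 0 0) * 1 + B 0 1 / A 0 1 * A 0 0
        ring
      · show B 0 1 = (B 0 0 - B 0 1 / A 0 1 * A 0 0) * 0 + B 0 1 / A 0 1 * A 0 1
        field_simp
        ring
      · show B 1 0 = (B 0 0 - B 0 1 / A 0 1 * A 0 0) * 0 + B 0 1 / A 0 1 * A 1 0
        have h00 := E 0 0
        rw [hc] at h00 ⊢
        have hz : A 0 1 * B 1 0 = 0 := by linear_combination h00
        have hB : B 1 0 = 0 := by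
          rcases mul_eq_zero.mp hz with h | h
          · exact absurd h hb
          · exact h
        rw [hB]
        ring
      · show B 1 1 = (B 0 0 - B 0 1 / A 0 1 * A 0 0) * 1 + B 0 1 / A 0 1 * A 1 1
        have h01 := E 0 1
        field_simp
        linear_combination h01
    · push_neg at hb
      have hd : A 0 0 ≠ A 1 1 := by
        intro hdd
        apply hA
        refine ⟨A 0 0, ?_⟩
        funext i j
        fin_cases i <;> fin_cases j <;>
          simp [Matrix.one_apply, hc, hb, smul_eq_mul] <;> first | rfl | (rw [hdd]) | skip
      refine ⟨B 0 0 - (B 0 0 - B 1 1) / (A 0 0 - A 1 1) * A 0 0,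
        (B 0 0 - B 1 1) / (A 0 0 - A 1 1), ?_⟩
      have hsub : A 0 0 - A 1 1 ≠ 0 := sub_ne_zero.mpr hd
      rw [entry]
      funext i j
      fin_cases i <;> fin_cases j
      · show B 0 0 = _ * 1 + _ * A 0 0
        ring
      · show B 0 1 = _ * 0 + _ * A 0 1
        have h01 := E 0 1
        rw [hb] at h01 ⊢
        have hz : B 0 1 * (A 0 0 - A 1 1) = 0 := by linear_combination h01
        have hB : B 0 1 = 0 := by
          rcases mul_eq_zero.mp hz with h | h
          · exact h
          · exact absurd h hsub
        rw [hB]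
        ring
      · show B 1 0 = _ * 0 + _ * A 1 0
        have h10 := E 1 0
        rw [hc] at h10 ⊢
        have hz : B 1 0 * (A 0 0 - A 1 1) = 0 := by linear_combination - h10
        have hB : B 1 0 = 0 := by
          rcases mul_eq_zero.mp hz with h | h
          · exact h
          · exact absurd h hsub
        rw [hB]
        ring
      · show B 1 1 = _ * 1 + _ * A 1 1
        field_simp
        ring
end Commutant

/-! ### Transfer to the fraction field -/

section Theta

abbrev KK : Type := RatFunc ℂ

noncomputable def theta : Mat →+* Matrix (Fin 2) (Fin 2) KK :=
  (algebraMap Rp KK).mapMatrix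

lemma theta_injective : Function.Injective theta := by
  intro x y h
  apply Matrix.ext
  intro i j
  apply RatFunc.algebraMap_injective ℂ
  have h' := congrFun (congrFun (congrArg (fun z => (z : Matrix (Fin 2) (Fin 2) KK)) h) i) j
  simpa [theta, RingHom.mapMatrix_apply, Matrix.map_apply] using h'

noncomputable def thetaU : Matˣ →* (Matrix (Fin 2) (Fin 2) KK)ˣ :=
  Units.map theta.toMonoidHom

lemma thetaU_injective : Function.Injective thetaU := by
  intro u v h
  apply Units.ext
  apply theta_injective
  have := congrArg Units.val h
  simpa [thetaU] using this

end Theta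

end BSAux

set_option maxHeartbeats 2000000 in
set_option synthInstance.maxHeartbeats 400000 in
open BSAux Monoid in
/-- For `m > 1`, every injective endomorphism of `B(m,m)` maps the center `⟨bᵐ⟩`
into itself. -/
theorem BS_m_m_injective_maps_center (m : ℤ) (hm : 1 < m)
    (φ : BS m m →* BS m m) (hφ : Function.Injective φ) :
    ∀ g ∈ Subgroup.zpowers (BSb m m ^ m), φ g ∈ Subgroup.zpowers (BSb m m ^ m) := by
  classical
  set M : ℕ := m.toNat with hMdef
  have hMm : (M : ℤ) = m := Int.toNat_of_nonneg (by omega)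
  have hM : 1 < M := by omega
  haveI : NeZero M := ⟨by omega⟩
  set ζ : ℂ := Complex.exp (2 * Real.pi * Complex.I / M) with hζdef
  have hζ : IsPrimitiveRoot ζ M := Complex.isPrimitiveRoot_exp M (by omega)
  have hζ0 : ζ ≠ 0 := hζ.ne_zero (by omega)
  have hζM : ζ ^ (M : ℕ) = 1 := hζ.pow_eq_one
  have hB : (uB ζ hζ0) ^ (M : ℕ) = 1 := by
    rw [uB_pow]
    apply Units.ext
    show (!![1, 0; Polynomial.C (ζ ^ (M : ℕ)) - 1, Polynomial.C (ζ ^ (M : ℕ))] : Mat) = (1 : Mat)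
    rw [hζM, map_one, Matrix.one_fin_two]
    apply Matrix.ext
    intro i j
    fin_cases i <;> fin_cases j <;> simp
  have hρinj : Function.Injective (CoprodI.lift (fFam M ζ hζ0 hB)) :=
    rho_injective M hM ζ hζ hζ0 hB
  set ρ : CoprodI (Fac M) →* Matˣ := CoprodI.lift (fFam M ζ hζ0 hB) with hρdef
  set π : BS m m →* CoprodI (Fac M) := piQ m M hMm with hπdef
  set a : BS m m := BSa m m with hadef
  set b : BS m m := BSb m m with hbdef
  -- the images of the generators under `φ`, pushed to matrices over `KK`
  set XU : (Matrix (Fin 2) (Fin 2) KK)ˣ := thetaU (ρ (π (φ b))) with hXUdef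
  set UU : (Matrix (Fin 2) (Fin 2) KK)ˣ := thetaU (ρ (π (φ a))) with hUUdef
  -- the defining relation, pushed through everything
  have hrel : (φ a)⁻¹ * (φ b) ^ m * (φ a) = (φ b) ^ m := by
    have h0 := congrArg φ (bs_rel m m)
    simpa [map_mul, map_inv, map_zpow] using h0
  have hrelK : XU ^ m * UU = UU * XU ^ m := by
    have h1 := congrArg (fun z => thetaU (ρ (π z))) hrel
    simp only [map_mul, map_inv, map_zpow] at h1
    calc XU ^ m * UU = UU * (UU⁻¹ * XU ^ m * UU) := by group
    _ = UU * XU ^ m := by rw [h1]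
  have hPU : (XU ^ m : _).val * UU.val = UU.val * (XU ^ m : _).val := by
    have := congrArg Units.val hrelK
    simpa [Units.val_mul] using this
  by_cases hscal : ∃ c : KK, ((XU ^ m : _) : Matrix (Fin 2) (Fin 2) KK) = c • 1
  · -- scalar case : `π (φ b) ^ m` is central, hence trivial
    obtain ⟨c, hc⟩ := hscal
    have hq : ∀ w : CoprodI (Fac M), (π (φ b)) ^ m * w = w * (π (φ b)) ^ m := by
      intro w
      apply hρinj
      apply thetaU_injective
      apply Units.ext
      have hXm : thetaU (ρ ((π (φ b)) ^ m)) = XU ^ m := by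
        rw [map_zpow, map_zpow]
      simp only [map_mul, Units.val_mul, hXm, hc]
      rw [smul_mul_assoc, one_mul, mul_smul_comm, mul_one]
    have hcent : (π (φ b)) ^ m = 1 := center_triv hM _ hq
    have hmem : φ (b ^ m) ∈ NZ m := by
      apply ker_piQ m M hM hMm
      rw [map_zpow, map_zpow]
      exact hcent
    intro g hg
    obtain ⟨k, rfl⟩ := Subgroup.mem_zpowers_iff.mp hg
    rw [map_zpow]
    exact Subgroup.zpow_mem _ hmem k
  · -- nonscalar case : contradiction
    exfalso
    obtain ⟨p, q, hU⟩ := commutant_two hscal hPU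
    have hPX : ((XU ^ m : _) : Matrix (Fin 2) (Fin 2) KK) * XU.val
        = XU.val * ((XU ^ m : _) : Matrix (Fin 2) (Fin 2) KK) := by
      have hcomm : XU ^ m * XU = XU * XU ^ m := by group
      have := congrArg Units.val hcomm
      simpa [Units.val_mul] using this
    have hXUcomm : UU.val * XU.val = XU.val * UU.val := by
      rw [hU, add_mul, mul_add, smul_mul_assoc, smul_mul_assoc, mul_smul_comm, mul_smul_comm,
        one_mul, mul_one, hPX]
    have hUX : UU * XU = XU * UU := by
      apply Units.ext
      simpa [Units.val_mul] using hXUcomm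
    have hcommBS : π (φ a) * π (φ b) = π (φ b) * π (φ a) := by
      apply hρinj
      apply thetaU_injective
      simpa [map_mul] using hUX
    have hker : π (φ (a * b * a⁻¹ * b⁻¹)) = 1 := by
      simp only [map_mul, map_inv]
      rw [hcommBS]
      group
    have hmem : φ (a * b * a⁻¹ * b⁻¹) ∈ NZ m := ker_piQ m M hM hMm _ hker
    obtain ⟨k, hk⟩ := Subgroup.mem_zpowers_iff.mp hmem
    have hc0cent : ∀ g : BS m m, g * φ (a * b * a⁻¹ * b⁻¹) = φ (a * b * a⁻¹ * b⁻¹) * g := by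
      intro g
      rw [← hk]
      have hcom : Commute g (BSb m m ^ m) := b_pow_central m g
      exact (hcom.zpow_right k).eq
    have hBScomm : (a * b * a⁻¹ * b⁻¹) * b = b * (a * b * a⁻¹ * b⁻¹) := by
      apply hφ
      have h1 : φ ((a * b * a⁻¹ * b⁻¹) * b) = φ (a * b * a⁻¹ * b⁻¹) * φ b := map_mul _ _ _
      have h2 : φ (b * (a * b * a⁻¹ * b⁻¹)) = φ b * φ (a * b * a⁻¹ * b⁻¹) := map_mul _ _ _
      rw [h1, h2]
      exact (hc0cent (φ b)).symm
    have hQcomm : (gA M * gB M * (gA M)⁻¹ * (gB M)⁻¹) * gB M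
        = gB M * (gA M * gB M * (gA M)⁻¹ * (gB M)⁻¹) := by
      have := congrArg π hBScomm
      simpa [map_mul, map_inv, hπdef, piQ_a, piQ_b, hadef, hbdef] using this
    apply key_word_ne (M := M) hM
    calc gA M * gB M * (gA M)⁻¹ * gB M * gA M * (gB M)⁻¹ * (gA M)⁻¹ * (gB M)⁻¹
        = (gA M * gB M * (gA M)⁻¹ * (gB M)⁻¹) * gB M
          * ((gA M * gB M * (gA M)⁻¹ * (gB M)⁻¹))⁻¹ * (gB M)⁻¹ := by group
    _ = gB M * (gA M * gB M * (gA M)⁻¹ * (gB M)⁻¹)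
          * ((gA M * gB M * (gA M)⁻¹ * (gB M)⁻¹))⁻¹ * (gB M)⁻¹ := by rw [hQcomm]
    _ = 1 := by group
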